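/- Let A, B ∈ SU(2,1) with eigenvectors P_A, P_B, P_C as above and eigenvalues λ_A, λ_B, λ_{AB}. Writing (AB)⁻¹'s eigenvalue as λ_C, so λ_{AB} = 1/λ_C (in SU(2,1), conjugate of λ_C since |λ_C|=1): the cross-ratio X(P_A, P_B, P_C, A⁻¹P_C) equals 1 if and only if λ_A·λ_B·λ_C = 1. -/

import Mathlib

open Complex Matrix

/-- The signature (2,1) Hermitian form on ℂ³. -/
def herm (z w : Fin 3 → ℂ) : ℂ :=
  z 0 * star (w 0) + z 1 * star (w 1) - z 2 * star (w 2)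

/-- The matrix of the Hermitian form: J = diag(1,1,−1). -/
def Jmat : Matrix (Fin 3) (Fin 3) ℂ := !![1, 0, 0; 0, 1, 0; 0, 0, -1]



lemma herm_smul_right (z w : Fin 3 → ℂ) (c : ℂ) :
    herm z (c • w) = (starRingEnd ℂ) c * herm z w := by
  simp [herm, Pi.smul_apply, smul_eq_mul, star_mul', RCLike.star_def]; ring

lemma herm_preserve (A : Matrix (Fin 3) (Fin 3) ℂ) (hA : Aᴴ * Jmat * A = Jmat)
    (x y : Fin 3 → ℂ) : herm (A.mulVec x) (A.mulVec y) = herm x y := by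
  have h00 := congr_fun (congr_fun hA 0) 0
  have h01 := congr_fun (congr_fun hA 0) 1
  have h02 := congr_fun (congr_fun hA 0) 2
  have h10 := congr_fun (congr_fun hA 1) 0
  have h11 := congr_fun (congr_fun hA 1) 1
  have h12 := congr_fun (congr_fun hA 1) 2
  have h20 := congr_fun (congr_fun hA 2) 0
  have h21 := congr_fun (congr_fun hA 2) 1
  have h22 := congr_fun (congr_fun hA 2) 2
  norm_num [Matrix.mul_apply, Fin.sum_univ_three, Jmat, Matrix.conjTranspose_apply, Matrix.cons_val_two,
    Matrix.vecHead, Matrix.vecTail] at h00 h01 h02 h10 h11 h12 h20 h21 h22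
  simp only [herm, Matrix.mulVec, dotProduct, Fin.sum_univ_three, star_add, star_mul',
    RCLike.star_def]
  linear_combination (x 0 * (starRingEnd ℂ) (y 0)) * h00 + (x 1 * (starRingEnd ℂ) (y 0)) * h01 +
    (x 2 * (starRingEnd ℂ) (y 0)) * h02 + (x 0 * (starRingEnd ℂ) (y 1)) * h10 +
    (x 1 * (starRingEnd ℂ) (y 1)) * h11 + (x 2 * (starRingEnd ℂ) (y 1)) * h12 +
    (x 0 * (starRingEnd ℂ) (y 2)) * h20 + (x 1 * (starRingEnd ℂ) (y 2)) * h21 +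
    (x 2 * (starRingEnd ℂ) (y 2)) * h22

theorem stmt13 (A B : Matrix (Fin 3) (Fin 3) ℂ)
    (hA : Aᴴ * Jmat * A = Jmat) (hdA : A.det = 1)
    (hB : Bᴴ * Jmat * B = Jmat) (hdB : B.det = 1)
    (PA PB PC PBA : Fin 3 → ℂ) (lA lB lC : ℂ)
    (hlA : ‖lA‖ = 1) (hlB : ‖lB‖ = 1) (hlC : ‖lC‖ = 1)
    (hPA : A.mulVec PA = lA • PA) (hPB : B.mulVec PB = lB • PB)
    (hPC : (A * B).mulVec PC = lC⁻¹ • PC)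
    (hPBA : A.mulVec PBA = PC)
    (h1 : herm PC PA ≠ 0) (h2 : herm PC PB ≠ 0)
    (h3 : herm PBA PA ≠ 0) (h4 : herm PBA PB ≠ 0)
    (h5 : herm PA PB ≠ 0) :
    (herm PC PA * herm PBA PB) / (herm PC PB * herm PBA PA) = 1 ↔ lA * lB * lC = 1 := by
  have hCne : lC ≠ 0 := by intro h; rw [h] at hlC; simp at hlC
  have hA1 : lA * (starRingEnd ℂ) lA = 1 := by
    rw [Complex.mul_conj, Complex.normSq_eq_norm_sq, hlA]; norm_num
  have hB1 : lB * (starRingEnd ℂ) lB = 1 := by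
    rw [Complex.mul_conj, Complex.normSq_eq_norm_sq, hlB]; norm_num
  -- B PC = lC⁻¹ • PBA
  have hinv : A⁻¹ * A = 1 := Matrix.nonsing_inv_mul A (by simp [hdA])
  have hBPC : B.mulVec PC = lC⁻¹ • PBA := by
    have step : A.mulVec (B.mulVec PC) = A.mulVec (lC⁻¹ • PBA) := by
      rw [Matrix.mulVec_mulVec, hPC, Matrix.mulVec_smul, hPBA]
    have := congrArg A⁻¹.mulVec step
    simpa [Matrix.mulVec_mulVec, ← mul_assoc, hinv, Matrix.one_mulVec] using this
  -- e1 : herm PBA PA in terms of herm PC PA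
  have e1 : (starRingEnd ℂ) lA * herm PC PA = herm PBA PA := by
    have := herm_preserve A hA PBA PA
    rw [hPBA, hPA, herm_smul_right] at this
    exact this
  have e2 : lC⁻¹ * ((starRingEnd ℂ) lB * herm PBA PB) = herm PC PB := by
    have := herm_preserve B hB PC PB
    rw [hBPC, hPB, herm_smul_right] at this
    rw [← this]
    simp [herm, Pi.smul_apply, smul_eq_mul, star_mul', RCLike.star_def, map_inv₀]
    ring
  have key : (herm PC PA * herm PBA PB) / (herm PC PB * herm PBA PA) = lA * lB * lC := by
    rw [div_eq_iff (mul_ne_zero h2 h3), ← e1]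
    have e2' : (starRingEnd ℂ) lB * herm PBA PB = lC * herm PC PB := by
      field_simp at e2
      linear_combination e2
    linear_combination (-(lB * lC * herm PC PB * herm PC PA)) * hA1 +
      (-(herm PC PA * herm PBA PB)) * hB1 + (lB * herm PC PA) * e2'
  rw [key]
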